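/- For every finite S ⊆ X with |S| ≥ 3 and all distinct v, w ∈ S: C(v, w, S) = min over y ∈ S \ {v, w} of (c(v, y) + C(y, w, S \ {v})). -/

import Mathlib

noncomputable section

/-- Sum of `c` over consecutive pairs of a list. -/
def pathCost {X : Type*} (c : X → X → ℝ) : List X → ℝ
  | [] => 0
  | [_] => 0
  | a :: b :: rest => c a b + pathCost c (b :: rest)

/-- `tourCost c v w S`: the minimum, over all lists starting at `v`, ending at `w`, and
containing each element of `S` exactly once, of the sum of `c` over consecutive pairs
(as an infimum of the finite nonempty set of such costs). -/
def tourCost {X : Type*} (c : X → X → ℝ) (v w : X) (S : Finset X) : ℝ :=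
  sInf (pathCost c '' {p : List X |
    p.head? = some v ∧ p.getLast? = some w ∧ p.Nodup ∧ ∀ x, x ∈ p ↔ x ∈ S})

namespace TourAux

variable {X : Type*}

/-- The set of tours from `a` to `b` visiting exactly `A`. -/
def Tset (a b : X) (A : Finset X) : Set (List X) :=
  {p : List X | p.head? = some a ∧ p.getLast? = some b ∧ p.Nodup ∧ ∀ x, x ∈ p ↔ x ∈ A}

lemma tourCost_eq (c : X → X → ℝ) (a b : X) (A : Finset X) :
    tourCost c a b A = sInf (pathCost c '' Tset a b A) := rfl

lemma finite_Tset [DecidableEq X] (a b : X) (A : Finset X) : (Tset a b A).Finite := by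
  apply Set.Finite.subset (A.toList.permutations.toFinset).finite_toSet
  rintro p ⟨-, -, hnd, hmem⟩
  simp only [Finset.mem_coe, List.mem_toFinset, List.mem_permutations]
  rw [List.perm_ext_iff_of_nodup hnd A.nodup_toList]
  simpa using hmem

lemma nonempty_Tset [DecidableEq X] {a b : X} {A : Finset X} (ha : a ∈ A) (hb : b ∈ A)
    (hab : a ≠ b) : (Tset a b A).Nonempty := by
  refine ⟨a :: (((A.erase a).erase b).toList ++ [b]), rfl, ?_, ?_, ?_⟩
  · show ((a :: ((A.erase a).erase b).toList) ++ [b]).getLast? = some b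
    exact List.getLast?_concat
  · rw [List.nodup_cons, List.nodup_append]
    refine ⟨?_, Finset.nodup_toList _, List.nodup_singleton b, ?_⟩
    · simp [Finset.mem_erase, hab]
    · intro x hx y hx'
      simp only [List.mem_singleton] at hx'
      subst hx'
      rintro rfl
      simp [Finset.mem_erase] at hx
  · intro x
    simp only [List.mem_cons, List.mem_append, Finset.mem_toList, Finset.mem_erase,
      List.mem_singleton, List.not_mem_nil, or_false]
    constructor
    · rintro (rfl | ⟨-, -, h⟩ | rfl) <;> assumption
    · intro hx
      by_cases h1 : x = a
      · exact Or.inl h1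
      by_cases h2 : x = b
      · exact Or.inr (Or.inr h2)
      · exact Or.inr (Or.inl ⟨h2, h1, hx⟩)

lemma pathCost_cons (c : X → X → ℝ) (v y : X) (q : List X) (h : q.head? = some y) :
    pathCost c (v :: q) = c v y + pathCost c q := by
  cases q with
  | nil => simp at h
  | cons z r =>
    obtain rfl : z = y := by simpa using h
    rfl

lemma cons_mem_Tset [DecidableEq X] {v y w : X} {A : Finset X} (hv : v ∈ A) {q : List X}
    (hq : q ∈ Tset y w (A.erase v)) : (v :: q) ∈ Tset v w A := by
  obtain ⟨h1, h2, h3, h4⟩ := hq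
  have hq0 : q ≠ [] := by rintro rfl; simp at h1
  obtain ⟨z, r, rfl⟩ := List.exists_cons_of_ne_nil hq0
  have hvq : v ∉ z :: r := fun h => by
    have := (h4 v).1 h
    simp at this
  refine ⟨rfl, ?_, List.nodup_cons.mpr ⟨hvq, h3⟩, ?_⟩
  · rw [List.getLast?_cons_cons]; exact h2
  · intro x
    rw [List.mem_cons, h4, Finset.mem_erase]
    constructor
    · rintro (rfl | ⟨-, h⟩) <;> [exact hv; exact h]
    · intro hx
      by_cases h1 : x = v
      · exact Or.inl h1
      · exact Or.inr ⟨h1, hx⟩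

lemma decomp [DecidableEq X] {v w : X} {S : Finset X} (h2 : 2 ≤ (S.erase v).card)
    (hvw : v ≠ w) {p : List X} (hp : p ∈ Tset v w S) :
    ∃ y ∈ (S.erase v).erase w, ∃ q ∈ Tset y w (S.erase v), p = v :: q := by
  obtain ⟨h1, hlast, h3, h4⟩ := hp
  cases p with
  | nil => simp at h1
  | cons a q =>
    obtain rfl : v = a := by symm; simpa using h1
    have hvq : v ∉ q := (List.nodup_cons.mp h3).1
    have hqnd : q.Nodup := (List.nodup_cons.mp h3).2
    have hmem : ∀ x, x ∈ q ↔ x ∈ S.erase v := by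
      intro x
      rw [Finset.mem_erase]
      constructor
      · intro hx
        exact ⟨fun h => hvq (h ▸ hx), (h4 x).1 (List.mem_cons_of_mem _ hx)⟩
      · rintro ⟨hne, hxS⟩
        rcases List.mem_cons.mp ((h4 x).2 hxS) with (rfl | h)
        · exact absurd rfl hne
        · exact h
    have hlen : 2 ≤ q.length := by
      have hts : q.toFinset = S.erase v := by
        ext x; rw [List.mem_toFinset]; exact hmem x
      calc 2 ≤ (S.erase v).card := h2
        _ = q.toFinset.card := by rw [hts]
        _ = q.length := List.toFinset_card_of_nodup hqnd
    obtain ⟨y, r, rfl⟩ : ∃ y r, q = y :: r := by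
      cases q with
      | nil => simp at hlen
      | cons y r => exact ⟨y, r, rfl⟩
    have hql : (y :: r).getLast? = some w := by
      rw [List.getLast?_cons_cons] at hlast; exact hlast
    have hyS : y ∈ S.erase v := (hmem y).1 (by simp)
    have hyw : y ≠ w := by
      obtain ⟨z, r', rfl⟩ : ∃ z r', r = z :: r' := by
        cases r with
        | nil => simp at hlen
        | cons z r' => exact ⟨z, r', rfl⟩
      have hwr : w ∈ z :: r' := by
        rw [List.getLast?_cons_cons] at hql
        exact List.mem_of_getLast? hql
      rintro rfl
      exact (List.nodup_cons.mp hqnd).1 hwr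
    exact ⟨y, Finset.mem_erase.mpr ⟨hyw, hyS⟩, y :: r, ⟨rfl, hql, hqnd, hmem⟩, rfl⟩

end TourAux

open TourAux in
/-- Bellman recursion: for `|S| ≥ 3` and distinct `v, w ∈ S`,
`C(v,w,S) = min over y ∈ S \ {v,w} of (c(v,y) + C(y,w,S \ {v}))`. -/
theorem tourCost_recursion {X : Type*} [DecidableEq X] (c : X → X → ℝ)
    (S : Finset X) (hS : 3 ≤ S.card) (v w : X) (hv : v ∈ S) (hw : w ∈ S) (hvw : v ≠ w) :
    tourCost c v w S =
      ((S.erase v).erase w).inf'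
        (by
          have hwv : w ∈ S.erase v := Finset.mem_erase.mpr ⟨fun h => hvw h.symm, hw⟩
          rw [← Finset.card_pos, Finset.card_erase_of_mem hwv, Finset.card_erase_of_mem hv]
          omega)
        (fun y => c v y + tourCost c y w (S.erase v)) := by
  have hwA : w ∈ S.erase v := Finset.mem_erase.mpr ⟨fun h => hvw h.symm, hw⟩
  have h2 : 2 ≤ (S.erase v).card := by
    rw [Finset.card_erase_of_mem hv]; omega
  have hNne : ((S.erase v).erase w).Nonempty := by
    rw [← Finset.card_pos, Finset.card_erase_of_mem hwA, Finset.card_erase_of_mem hv]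
    omega
  apply le_antisymm
  · obtain ⟨y, hy, heq⟩ := Finset.exists_mem_eq_inf' hNne
      (fun y => c v y + tourCost c y w (S.erase v))
    rw [heq]
    have hyA : y ∈ S.erase v := (Finset.mem_erase.mp hy).2
    have hyw : y ≠ w := (Finset.mem_erase.mp hy).1
    have hne := nonempty_Tset hyA hwA hyw
    obtain ⟨q, hq, hpc⟩ := (hne.image (pathCost c)).csInf_mem
      ((finite_Tset y w (S.erase v)).image _)
    calc tourCost c v w S ≤ pathCost c (v :: q) := by
          rw [tourCost_eq]
          exact csInf_le ((finite_Tset v w S).image _).bddBelow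
            ⟨v :: q, cons_mem_Tset hv hq, rfl⟩
      _ = c v y + pathCost c q := pathCost_cons c v y q hq.1
      _ = c v y + tourCost c y w (S.erase v) := by rw [hpc]; rfl
  · rw [tourCost_eq]
    apply le_csInf ((nonempty_Tset hv hw hvw).image _)
    rintro b ⟨p, hp, rfl⟩
    obtain ⟨y, hy, q, hq, rfl⟩ := decomp h2 hvw hp
    rw [pathCost_cons c v y q hq.1]
    have h1 : tourCost c y w (S.erase v) ≤ pathCost c q := by
      rw [tourCost_eq]
      exact csInf_le ((finite_Tset y w (S.erase v)).image _).bddBelow ⟨q, hq, rfl⟩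
    calc ((S.erase v).erase w).inf' hNne (fun y => c v y + tourCost c y w (S.erase v))
        ≤ c v y + tourCost c y w (S.erase v) := Finset.inf'_le _ hy
      _ ≤ c v y + pathCost c q := by linarith
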